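/- Let C be a positive semidefinite operator on H₁⊗H₂, Π a projection on H₁⊗H₂, and Π₀ a projection on H₂ such that Π ≥ 1⊗Π₀. Then Tr₂(Π C Π) ≥ Tr₂((1⊗Π₀) C (1⊗Π₀)) in the Loewner order. -/

import Mathlib

open scoped ComplexOrder
open Matrix

noncomputable section

open Kronecker

/-- Partial trace over the second tensor factor. -/
def ptrace2 {n₁ n₂ : Type*} [Fintype n₂] (C : Matrix (n₁ × n₂) (n₁ × n₂) ℂ) :
    Matrix n₁ n₁ ℂ :=
  Matrix.of fun i j => ∑ k : n₂, C (i, k) (j, k)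

/-- A matrix that is both PSD and negative-PSD is zero. -/
lemma aux_psd_neg_psd_eq_zero {n : Type*} [Fintype n] [DecidableEq n] {M : Matrix n n ℂ}
    (h1 : M.PosSemidef) (h2 : (-M).PosSemidef) : M = 0 := by
  have hv : ∀ x : n → ℂ, M *ᵥ x = 0 := by
    intro x
    refine (h1.dotProduct_mulVec_zero_iff x).1 (le_antisymm ?_ (h1.dotProduct_mulVec_nonneg x))
    have := h2.dotProduct_mulVec_nonneg x
    rw [Matrix.neg_mulVec, dotProduct_neg] at this
    exact neg_nonneg.mp this
  ext i j
  have := congr_fun (hv (Pi.single j 1)) i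
  rwa [Matrix.mulVec_single_one] at this

/-- Partial trace of a PSD matrix is PSD. -/
lemma aux_ptrace2_posSemidef {n₁ n₂ : Type*} [Fintype n₁] [Fintype n₂] [DecidableEq n₂]
    {X : Matrix (n₁ × n₂) (n₁ × n₂) ℂ} (hX : X.PosSemidef) : (ptrace2 X).PosSemidef := by
  refine Matrix.PosSemidef.of_dotProduct_mulVec_nonneg ?_ ?_
  · show (ptrace2 X)ᴴ = ptrace2 X
    ext i j
    simp only [ptrace2, Matrix.conjTranspose_apply, Matrix.of_apply, star_sum]
    refine Finset.sum_congr rfl fun k _ => ?_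
    exact congr_fun (congr_fun hX.1 (i, k)) (j, k)
  · intro x
    have key : ∀ k : n₂, star (fun p : n₁ × n₂ => if p.2 = k then x p.1 else 0) ⬝ᵥ
        X *ᵥ (fun p : n₁ × n₂ => if p.2 = k then x p.1 else 0)
        = ∑ i : n₁, ∑ j : n₁, star (x i) * (X (i, k) (j, k) * x j) := by
      intro k
      simp only [dotProduct, Matrix.mulVec, dotProduct, Pi.star_apply,
        Fintype.sum_prod_type, mul_ite, mul_zero, ite_mul, zero_mul]
      simp [apply_ite (starRingEnd ℂ), ite_mul, zero_mul, Finset.sum_ite_eq,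
        Finset.sum_ite_eq', Finset.mul_sum]
    have lhs : star x ⬝ᵥ (ptrace2 X) *ᵥ x
        = ∑ k : n₂, ∑ i : n₁, ∑ j : n₁, star (x i) * (X (i, k) (j, k) * x j) := by
      simp only [dotProduct, Matrix.mulVec, dotProduct, ptrace2, Matrix.of_apply, Pi.star_apply,
        Finset.sum_mul, Finset.mul_sum]
      exact Eq.trans (Finset.sum_congr rfl fun j _ => Finset.sum_comm) Finset.sum_comm
    rw [lhs]
    refine Finset.sum_nonneg fun k _ => ?_
    rw [← key k]
    exact hX.dotProduct_mulVec_nonneg _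

/-- Sandwiching by `1 ⊗ A`, `1 ⊗ B` under the partial trace. -/
lemma aux_ptrace2_kron_sandwich {n₁ n₂ : Type*} [Fintype n₁] [Fintype n₂] [DecidableEq n₁]
    (A B : Matrix n₂ n₂ ℂ) (X : Matrix (n₁ × n₂) (n₁ × n₂) ℂ) (i j : n₁) :
    ptrace2 (((1 : Matrix n₁ n₁ ℂ) ⊗ₖ A) * X * ((1 : Matrix n₁ n₁ ℂ) ⊗ₖ B)) i j
      = ∑ a : n₂, ∑ b : n₂, (B * A) b a * X (i, a) (j, b) := by
  simp only [ptrace2, Matrix.of_apply, Matrix.mul_apply, Matrix.kroneckerMap_apply,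
    Matrix.one_apply, Fintype.sum_prod_type, ite_mul, zero_mul, one_mul, mul_ite, mul_zero,
    mul_one, Finset.sum_ite_eq, Finset.sum_ite_eq', Finset.mem_univ, if_true,
    Finset.sum_mul, Finset.mul_sum, Finset.sum_ite_irrel, Finset.sum_const_zero]
  refine Eq.trans (Finset.sum_congr rfl fun k _ => Finset.sum_comm) ?_
  refine Eq.trans Finset.sum_comm (Finset.sum_congr rfl fun a _ => ?_)
  refine Eq.trans Finset.sum_comm (Finset.sum_congr rfl fun b _ => ?_)
  exact Finset.sum_congr rfl fun k _ => by ring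

/-- conjugate transpose of `1 ⊗ A` for Hermitian `A`. -/
lemma aux_kron_one_conjTranspose {n₁ n₂ : Type*} [Fintype n₁] [Fintype n₂] [DecidableEq n₁]
    (A : Matrix n₂ n₂ ℂ) (hA : Aᴴ = A) :
    ((1 : Matrix n₁ n₁ ℂ) ⊗ₖ A)ᴴ = (1 : Matrix n₁ n₁ ℂ) ⊗ₖ A := by
  ext ⟨i, a⟩ ⟨j, b⟩
  simp only [Matrix.conjTranspose_apply, Matrix.kroneckerMap_apply, star_mul',
    Matrix.one_apply, apply_ite (star : ℂ → ℂ), star_one, star_zero]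
  rw [show star (A b a) = Aᴴ a b from rfl, hA]
  by_cases h : i = j <;> simp [h, eq_comm]

/-- If C ≥ 0, Π, Π₀ are projections with Π ≥ 1⊗Π₀, then
Tr₂(Π C Π) ≥ Tr₂((1⊗Π₀) C (1⊗Π₀)) in the Loewner order. -/
theorem stmt_2 {n₁ n₂ : Type*} [Fintype n₁] [Fintype n₂] [DecidableEq n₁] [DecidableEq n₂]
    (C P : Matrix (n₁ × n₂) (n₁ × n₂) ℂ) (P₀ : Matrix n₂ n₂ ℂ)
    (hC : C.PosSemidef)
    (hP : Pᴴ = P ∧ P * P = P)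
    (hP₀ : P₀ᴴ = P₀ ∧ P₀ * P₀ = P₀)
    (hge : (P - (1 : Matrix n₁ n₁ ℂ) ⊗ₖ P₀).PosSemidef) :
    (ptrace2 (P * C * P) -
      ptrace2 (((1 : Matrix n₁ n₁ ℂ) ⊗ₖ P₀) * C * ((1 : Matrix n₁ n₁ ℂ) ⊗ₖ P₀))).PosSemidef := by
  set Q : Matrix (n₁ × n₂) (n₁ × n₂) ℂ := (1 : Matrix n₁ n₁ ℂ) ⊗ₖ P₀ with hQdef
  have hQH : Qᴴ = Q := aux_kron_one_conjTranspose P₀ hP₀.1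
  have hQQ : Q * Q = Q := by
    rw [hQdef, ← Matrix.mul_kronecker_mul, one_mul, hP₀.2]
  -- Q ≤ P implies Q * P = Q
  have hQP : Q * P = Q := by
    have h1 : ((1 - P) * (P - Q) * (1 - P)).PosSemidef := by
      have := hge.mul_mul_conjTranspose_same (1 - P)
      rwa [Matrix.conjTranspose_sub, Matrix.conjTranspose_one, hP.1] at this
    have heq : (1 - P) * (P - Q) * (1 - P) = -((Q * (1 - P))ᴴ * (Q * (1 - P))) := by
      have e1 : (Q * (1 - P))ᴴ * (Q * (1 - P)) = (1 - P) * Q * (1 - P) := by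
        rw [Matrix.conjTranspose_mul, Matrix.conjTranspose_sub, Matrix.conjTranspose_one,
          hP.1, hQH]
        calc (1 - P) * Q * (Q * (1 - P)) = (1 - P) * (Q * Q) * (1 - P) := by noncomm_ring
        _ = (1 - P) * Q * (1 - P) := by rw [hQQ]
      rw [e1]
      have e2 : (1 - P) * (P - Q) * (1 - P)
          = (P - P * P) * (1 - P) - (1 - P) * Q * (1 - P) := by noncomm_ring
      rw [e2, hP.2]
      noncomm_ring
    have hzero : (Q * (1 - P))ᴴ * (Q * (1 - P)) = 0 := by
      apply aux_psd_neg_psd_eq_zero (Matrix.posSemidef_conjTranspose_mul_self _)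
      rw [← heq]; exact h1
    have h0 := Matrix.conjTranspose_mul_self_eq_zero.1 hzero
    have h2 : Q * 1 - Q * P = 0 := by rw [← Matrix.mul_sub]; exact h0
    rw [Matrix.mul_one, sub_eq_zero] at h2
    exact h2.symm
  have hPQ : P * Q = Q := by
    have := congrArg Matrix.conjTranspose hQP
    rwa [Matrix.conjTranspose_mul, hQH, hP.1] at this
  set X := P * C * P with hXdef
  have hXpsd : X.PosSemidef := by
    have := hC.mul_mul_conjTranspose_same P
    rwa [hP.1] at this
  -- Q (PCP) Q = Q C Q
  have hsand : Q * X * Q = Q * C * Q := by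
    calc Q * (P * C * P) * Q = (Q * P) * C * (P * Q) := by noncomm_ring
    _ = Q * C * Q := by rw [hQP, hPQ]
  have hperp : ((1 : Matrix n₂ n₂ ℂ) - P₀) * ((1 : Matrix n₂ n₂ ℂ) - P₀) = 1 - P₀ := by
    have e : ((1 : Matrix n₂ n₂ ℂ) - P₀) * ((1 : Matrix n₂ n₂ ℂ) - P₀)
        = 1 - P₀ - P₀ + P₀ * P₀ := by noncomm_ring
    rw [e, hP₀.2]; noncomm_ring
  have hkey : ptrace2 X -
      ptrace2 (((1 : Matrix n₁ n₁ ℂ) ⊗ₖ P₀) * C * ((1 : Matrix n₁ n₁ ℂ) ⊗ₖ P₀))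
      = ptrace2 (((1 : Matrix n₁ n₁ ℂ) ⊗ₖ ((1 : Matrix n₂ n₂ ℂ) - P₀)) * X *
          ((1 : Matrix n₁ n₁ ℂ) ⊗ₖ ((1 : Matrix n₂ n₂ ℂ) - P₀))) := by
    have hQCQ : ((1 : Matrix n₁ n₁ ℂ) ⊗ₖ P₀) * C * ((1 : Matrix n₁ n₁ ℂ) ⊗ₖ P₀)
        = ((1 : Matrix n₁ n₁ ℂ) ⊗ₖ P₀) * X * ((1 : Matrix n₁ n₁ ℂ) ⊗ₖ P₀) := by
      rw [← hQdef, hsand]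
    rw [hQCQ]
    ext i j
    rw [Matrix.sub_apply]
    rw [aux_ptrace2_kron_sandwich P₀ P₀ X i j,
      aux_ptrace2_kron_sandwich ((1 : Matrix n₂ n₂ ℂ) - P₀) ((1 : Matrix n₂ n₂ ℂ) - P₀) X i j,
      hP₀.2, hperp]
    have hptr : ptrace2 X i j = ∑ a : n₂, ∑ b : n₂,
        (1 : Matrix n₂ n₂ ℂ) b a * X (i, a) (j, b) := by
      simp only [ptrace2, Matrix.of_apply, Matrix.one_apply, ite_mul, one_mul, zero_mul]
      refine Finset.sum_congr rfl fun a _ => ?_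
      rw [Finset.sum_ite_eq' Finset.univ a (fun b => X (i, a) (j, b))]
      simp
    rw [hptr, ← Finset.sum_sub_distrib]
    refine Finset.sum_congr rfl fun a _ => ?_
    rw [← Finset.sum_sub_distrib]
    refine Finset.sum_congr rfl fun b _ => ?_
    rw [Matrix.sub_apply]
    ring
  rw [hkey]
  rw [show ((1 : Matrix n₁ n₁ ℂ) ⊗ₖ ((1 : Matrix n₂ n₂ ℂ) - P₀)) * X *
      ((1 : Matrix n₁ n₁ ℂ) ⊗ₖ ((1 : Matrix n₂ n₂ ℂ) - P₀))
      = ((1 : Matrix n₁ n₁ ℂ) ⊗ₖ ((1 : Matrix n₂ n₂ ℂ) - P₀))ᴴ * X *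
        ((1 : Matrix n₁ n₁ ℂ) ⊗ₖ ((1 : Matrix n₂ n₂ ℂ) - P₀)) by
    rw [aux_kron_one_conjTranspose _ (by rw [Matrix.conjTranspose_sub,
      Matrix.conjTranspose_one, hP₀.1])]]
  exact aux_ptrace2_posSemidef (hXpsd.conjTranspose_mul_mul_same _)
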